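/- Let 0 < α < 1, let φ : ℝ^L → ℝ^L be continuous and K-Lipschitz componentwise (in the ℓ¹ sense), and fix x₀ ∈ ℝ^L and N > 0. Then for all continuous x, y : [0,T] → ℝ^L, ‖T_{x₀} x − T_{x₀} y‖* ≤ (L·K / N^{α}) · ‖x − y‖*, where ‖z‖* = Σ_{k=1}^{L} sup_{t∈[0,T]} e^{−N t} |z_k(t)|. -/

import Mathlib

open scoped BigOperators

open MeasureTheory intervalIntegral in
private lemma volterra_keyB {α N t : ℝ} (hα : 0 < α) (hN : 0 < N) (ht : 0 ≤ t) :
    ∫ u in (0:ℝ)..t, u ^ (α - 1) * Real.exp (-(N * u)) ≤ Real.Gamma α / N ^ α := by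
  have hint : IntegrableOn (fun u : ℝ => u ^ (α - 1) * Real.exp (-(N * u))) (Set.Ioi 0) := by
    have h := integrableOn_rpow_mul_exp_neg_mul_rpow
      (p := 1) (by linarith : (-1:ℝ) < α - 1) zero_lt_one hN
    refine h.congr_fun (fun u _ => ?_) measurableSet_Ioi
    dsimp only
    rw [Real.rpow_one, neg_mul]
  have hmono : (∫ u in Set.Ioc 0 t, u ^ (α - 1) * Real.exp (-(N * u)))
      ≤ ∫ u in Set.Ioi 0, u ^ (α - 1) * Real.exp (-(N * u)) := by
    refine setIntegral_mono_set hint ?_ (HasSubset.Subset.eventuallyLE Set.Ioc_subset_Ioi_self)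
    filter_upwards [self_mem_ae_restrict measurableSet_Ioi] with u hu
    have : (0:ℝ) < u := hu
    positivity
  rw [intervalIntegral.integral_of_le ht]
  refine le_trans hmono ?_
  rw [Real.integral_rpow_mul_exp_neg_mul_Ioi hα hN]
  rw [Real.div_rpow zero_le_one hN.le, Real.one_rpow]
  rw [div_mul_eq_mul_div, one_mul]

open MeasureTheory intervalIntegral in
private lemma volterra_keyA {α N : ℝ} (hα : 0 < α) (hN : 0 < N) {t : ℝ} (ht : 0 ≤ t) :
    ∫ s in (0:ℝ)..t, (t - s) ^ (α - 1) * Real.exp (N * s)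
      ≤ Real.Gamma α / N ^ α * Real.exp (N * t) := by
  have h1 : ∀ s : ℝ, (t - s) ^ (α - 1) * Real.exp (N * s)
      = Real.exp (N * t) * ((t - s) ^ (α - 1) * Real.exp (-(N * (t - s)))) := by
    intro s
    have he : Real.exp (N * t) * Real.exp (-(N * (t - s))) = Real.exp (N * s) := by
      rw [← Real.exp_add]; congr 1; ring
    rw [← he]; ring
  simp only [h1]
  rw [intervalIntegral.integral_const_mul]
  have h2 : (∫ s in (0:ℝ)..t, (t - s) ^ (α - 1) * Real.exp (-(N * (t - s))))
      = ∫ u in (0:ℝ)..t, u ^ (α - 1) * Real.exp (-(N * u)) := by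
    have := intervalIntegral.integral_comp_sub_left (a := (0:ℝ)) (b := t)
      (fun u => u ^ (α - 1) * Real.exp (-(N * u))) t
    simpa using this
  rw [h2, mul_comm (Real.Gamma α / N ^ α)]
  exact mul_le_mul_of_nonneg_left (volterra_keyB hα hN ht) (Real.exp_pos _).le

/-- The fractional Volterra operator
`(T_{x₀} x)_k(t) = (x₀)_k + (1/Γ(α)) ∫_0^t (t-s)^{α-1} φ_k(x(s)) ds`. -/
noncomputable def volterraOp {L : ℕ} (α : ℝ) (x₀ : Fin L → ℝ)
    (φ : (Fin L → ℝ) → (Fin L → ℝ)) (x : ℝ → Fin L → ℝ) (t : ℝ) (k : Fin L) : ℝ :=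
  x₀ k + (1 / Real.Gamma α) * ∫ s in (0:ℝ)..t, (t - s) ^ (α - 1) * φ (x s) k

/-- For `0 < α < 1`, `φ` continuous and `K`-Lipschitz componentwise
(in the ℓ¹ sense), `x₀ ∈ ℝ^L` and `N > 0`, the Volterra operator satisfies
`‖T_{x₀} x − T_{x₀} y‖* ≤ (L·K/N^α)·‖x − y‖*` for all continuous `x, y : [0,T] → ℝ^L`. -/
theorem volterra_operator_weighted_contraction_estimate
    (T : ℝ) (hT : 0 < T) (L : ℕ) (hL : 1 ≤ L) (α : ℝ) (hα : 0 < α) (hα1 : α < 1)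
    (K : ℝ) (N : ℝ) (hN : 0 < N)
    (φ : (Fin L → ℝ) → (Fin L → ℝ)) (hφc : Continuous φ)
    (hφ : ∀ (k : Fin L) (u v : Fin L → ℝ), |φ u k - φ v k| ≤ K * ∑ j : Fin L, |u j - v j|)
    (x₀ : Fin L → ℝ)
    (x y : ℝ → Fin L → ℝ)
    (hx : ContinuousOn x (Set.Icc 0 T)) (hy : ContinuousOn y (Set.Icc 0 T)) :
    (∑ k : Fin L, ⨆ t : Set.Icc (0:ℝ) T,
        Real.exp (-N * (t : ℝ)) * |volterraOp α x₀ φ x t k - volterraOp α x₀ φ y t k|)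
      ≤ ((L : ℝ) * K / N ^ α) *
        ∑ k : Fin L, ⨆ t : Set.Icc (0:ℝ) T, Real.exp (-N * (t : ℝ)) * |x t k - y t k| := by
  classical
  haveI : Nonempty (Fin L) := ⟨⟨0, hL⟩⟩
  haveI hne : Nonempty (Set.Icc (0:ℝ) T) := ⟨⟨0, le_refl 0, hT.le⟩⟩
  obtain ⟨j0⟩ := (inferInstance : Nonempty (Fin L))
  have hK : 0 ≤ K := by
    have h := hφ j0 (fun _ => 0) (Pi.single j0 1)
    have hs : ∑ j : Fin L, |(fun _ => (0:ℝ)) j - (Pi.single j0 (1:ℝ) : Fin L → ℝ) j| = 1 := by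
      simp only [Pi.single_apply]
      rw [Finset.sum_eq_single j0]
      · simp
      · intro b _ hb; simp [hb]
      · simp
    rw [hs, mul_one] at h
    exact le_trans (abs_nonneg _) h
  have hGamma : 0 < Real.Gamma α := Real.Gamma_pos_of_pos hα
  have hNα : 0 < N ^ α := Real.rpow_pos_of_pos hN α
  -- boundedness of the weighted differences
  have hbdd : ∀ j : Fin L, BddAbove (Set.range fun t : Set.Icc (0:ℝ) T =>
      Real.exp (-N * (t : ℝ)) * |x t j - y t j|) := by
    intro j
    have hx' : Continuous fun t : Set.Icc (0:ℝ) T => x t j :=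
      (continuous_apply j).comp hx.restrict
    have hy' : Continuous fun t : Set.Icc (0:ℝ) T => y t j :=
      (continuous_apply j).comp hy.restrict
    have hc : Continuous fun t : Set.Icc (0:ℝ) T =>
        Real.exp (-N * (t : ℝ)) * |x t j - y t j| :=
      (Real.continuous_exp.comp (continuous_const.mul continuous_subtype_val)).mul
        ((hx'.sub hy').abs)
    exact (isCompact_range hc).bddAbove
  set M := ∑ j : Fin L, ⨆ t : Set.Icc (0:ℝ) T,
      Real.exp (-N * (t : ℝ)) * |x t j - y t j| with hMdef
  have hMle : ∀ (j : Fin L) (s : ℝ), s ∈ Set.Icc 0 T →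
      Real.exp (-N * s) * |x s j - y s j|
        ≤ ⨆ t : Set.Icc (0:ℝ) T, Real.exp (-N * (t : ℝ)) * |x t j - y t j| := by
    intro j s hs
    exact le_ciSup (hbdd j) (⟨s, hs⟩ : Set.Icc (0:ℝ) T)
  have hMj0 : ∀ j : Fin L, 0 ≤ ⨆ t : Set.Icc (0:ℝ) T,
      Real.exp (-N * (t : ℝ)) * |x t j - y t j| := by
    intro j
    refine le_trans ?_ (hMle j 0 ⟨le_refl 0, hT.le⟩)
    positivity
  have hM0 : 0 ≤ M := Finset.sum_nonneg fun j _ => hMj0 j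
  -- pointwise bound on the sum of coordinate differences
  have hsum : ∀ s : ℝ, s ∈ Set.Icc 0 T →
      ∑ j : Fin L, |x s j - y s j| ≤ Real.exp (N * s) * M := by
    intro s hs
    rw [hMdef, Finset.mul_sum]
    refine Finset.sum_le_sum fun j _ => ?_
    have h := hMle j s hs
    have he : Real.exp (N * s) * (Real.exp (-N * s) * |x s j - y s j|) = |x s j - y s j| := by
      rw [← mul_assoc, ← Real.exp_add]
      simp
    calc |x s j - y s j|
        = Real.exp (N * s) * (Real.exp (-N * s) * |x s j - y s j|) := he.symm
      _ ≤ Real.exp (N * s) * (⨆ t : Set.Icc (0:ℝ) T,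
            Real.exp (-N * (t : ℝ)) * |x t j - y t j|) :=
          mul_le_mul_of_nonneg_left h (Real.exp_pos _).le
  -- the key pointwise estimate
  have key : ∀ (k : Fin L) (t : ℝ), t ∈ Set.Icc 0 T →
      Real.exp (-N * t) * |volterraOp α x₀ φ x t k - volterraOp α x₀ φ y t k|
        ≤ K / N ^ α * M := by
    intro k t ht
    obtain ⟨ht0, htT⟩ := ht
    have hIcc : Set.uIcc (0:ℝ) t = Set.Icc 0 t := Set.uIcc_of_le ht0
    have hsub : Set.Icc (0:ℝ) t ⊆ Set.Icc 0 T := Set.Icc_subset_Icc le_rfl htT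
    have hfint : IntervalIntegrable (fun s => (t - s) ^ (α - 1)) MeasureTheory.volume 0 t := by
      have h := (intervalIntegral.intervalIntegrable_rpow' (by linarith : (-1:ℝ) < α - 1)
        (a := 0) (b := t)).comp_sub_left t
      simpa using h.symm
    have hgc : ContinuousOn (fun s => φ (x s) k) (Set.Icc 0 t) :=
      (continuous_apply k).comp_continuousOn (hφc.comp_continuousOn (hx.mono hsub))
    have hhc : ContinuousOn (fun s => φ (y s) k) (Set.Icc 0 t) :=
      (continuous_apply k).comp_continuousOn (hφc.comp_continuousOn (hy.mono hsub))
    have hgi : IntervalIntegrable (fun s => (t - s) ^ (α - 1) * φ (x s) k) MeasureTheory.volume 0 t :=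
      hfint.mul_continuousOn (by rw [hIcc]; exact hgc)
    have hhi : IntervalIntegrable (fun s => (t - s) ^ (α - 1) * φ (y s) k) MeasureTheory.volume 0 t :=
      hfint.mul_continuousOn (by rw [hIcc]; exact hhc)
    have hdi : IntervalIntegrable
        (fun s => (t - s) ^ (α - 1) * (φ (x s) k - φ (y s) k)) MeasureTheory.volume 0 t := by
      have : (fun s => (t - s) ^ (α - 1) * (φ (x s) k - φ (y s) k))
          = fun s => (t - s) ^ (α - 1) * φ (x s) k - (t - s) ^ (α - 1) * φ (y s) k :=
        funext fun s => mul_sub _ _ _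
      rw [this]; exact hgi.sub hhi
    have hbi : IntervalIntegrable
        (fun s => (t - s) ^ (α - 1) * (K * (Real.exp (N * s) * M))) MeasureTheory.volume 0 t :=
      hfint.mul_continuousOn
        ((continuous_const.mul ((Real.continuous_exp.comp
          (continuous_const.mul continuous_id)).mul continuous_const)).continuousOn)
    have hdiff : volterraOp α x₀ φ x t k - volterraOp α x₀ φ y t k
        = (1 / Real.Gamma α) * ∫ s in (0:ℝ)..t, (t - s) ^ (α - 1) * (φ (x s) k - φ (y s) k) := by
      simp only [volterraOp]
      have h1 : (∫ s in (0:ℝ)..t, (t - s) ^ (α - 1) * (φ (x s) k - φ (y s) k))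
          = (∫ s in (0:ℝ)..t, (t - s) ^ (α - 1) * φ (x s) k)
            - ∫ s in (0:ℝ)..t, (t - s) ^ (α - 1) * φ (y s) k := by
        rw [← intervalIntegral.integral_sub hgi hhi]
        congr 1
        funext s
        ring
      rw [h1]; ring
    have hbound : ∀ s ∈ Set.Icc (0:ℝ) t,
        |(t - s) ^ (α - 1) * (φ (x s) k - φ (y s) k)|
          ≤ (t - s) ^ (α - 1) * (K * (Real.exp (N * s) * M)) := by
      intro s hs
      have hts : (0:ℝ) ≤ t - s := sub_nonneg.2 hs.2
      rw [abs_mul, abs_of_nonneg (Real.rpow_nonneg hts _)]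
      refine mul_le_mul_of_nonneg_left ?_ (Real.rpow_nonneg hts _)
      calc |φ (x s) k - φ (y s) k| ≤ K * ∑ j : Fin L, |x s j - y s j| := hφ k _ _
        _ ≤ K * (Real.exp (N * s) * M) :=
            mul_le_mul_of_nonneg_left (hsum s ⟨hs.1, le_trans hs.2 htT⟩) hK
    have habs : |∫ s in (0:ℝ)..t, (t - s) ^ (α - 1) * (φ (x s) k - φ (y s) k)|
        ≤ ∫ s in (0:ℝ)..t, (t - s) ^ (α - 1) * (K * (Real.exp (N * s) * M)) := by
      refine le_trans (intervalIntegral.abs_integral_le_integral_abs ht0) ?_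
      exact intervalIntegral.integral_mono_on ht0 hdi.abs hbi
        (fun s hs => hbound s hs)
    have hend : (∫ s in (0:ℝ)..t, (t - s) ^ (α - 1) * (K * (Real.exp (N * s) * M)))
        ≤ K * M * (Real.Gamma α / N ^ α * Real.exp (N * t)) := by
      have h1 : (fun s => (t - s) ^ (α - 1) * (K * (Real.exp (N * s) * M)))
          = fun s => (K * M) * ((t - s) ^ (α - 1) * Real.exp (N * s)) := by
        funext s; ring
      rw [h1, intervalIntegral.integral_const_mul]
      exact mul_le_mul_of_nonneg_left (volterra_keyA hα hN ht0) (by positivity)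
    have hKM : 0 ≤ K * M := by positivity
    have hfinal : Real.exp (-N * t) * |volterraOp α x₀ φ x t k - volterraOp α x₀ φ y t k|
        ≤ Real.exp (-N * t) * ((1 / Real.Gamma α)
          * (K * M * (Real.Gamma α / N ^ α * Real.exp (N * t)))) := by
      rw [hdiff, abs_mul, abs_of_nonneg (by positivity : (0:ℝ) ≤ 1 / Real.Gamma α)]
      refine mul_le_mul_of_nonneg_left ?_ (Real.exp_pos _).le
      exact mul_le_mul_of_nonneg_left (le_trans habs hend) (by positivity)
    refine le_trans hfinal (le_of_eq ?_)
    have hee : Real.exp (-N * t) * Real.exp (N * t) = 1 := by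
      rw [← Real.exp_add]; simp
    rw [show Real.exp (-N * t) * ((1 / Real.Gamma α)
          * (K * M * (Real.Gamma α / N ^ α * Real.exp (N * t))))
        = (K * M / N ^ α) * (Real.exp (-N * t) * Real.exp (N * t))
          * (Real.Gamma α / Real.Gamma α) from by ring,
      hee, div_self (ne_of_gt hGamma)]
    ring
  -- assemble
  calc (∑ k : Fin L, ⨆ t : Set.Icc (0:ℝ) T,
        Real.exp (-N * (t : ℝ)) * |volterraOp α x₀ φ x t k - volterraOp α x₀ φ y t k|)
      ≤ ∑ _k : Fin L, K / N ^ α * M := by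
        refine Finset.sum_le_sum fun k _ => ?_
        exact ciSup_le fun t => key k t t.2
    _ = (L : ℝ) * (K / N ^ α * M) := by
        rw [Finset.sum_const, Finset.card_univ, Fintype.card_fin, nsmul_eq_mul]
    _ = ((L : ℝ) * K / N ^ α) * M := by ring
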